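/- Let d be an n-distance on X whose best constant is K*ₙ (i.e., d(x₁,…,xₙ) ≤ K*ₙ·∑_{i=1}^n d(…)ᵢᶻ for all arguments, and K*ₙ is the least such constant). Then for any integer k with n − 1/K*ₙ < k ≤ n, we have d(x₁,…,xₙ) ≤ (1/(1/K*ₙ − n + k))·∑_{i=1}^k d(x₁,…,xₙ)ᵢᶻ for all x₁,…,xₙ,z ∈ X. -/

import Mathlib

open Finset Function

structure IsNDistance {X : Type*} {n : ℕ} (d : (Fin n → X) → ℝ) : Prop where
  nonneg : ∀ x, 0 ≤ d x
  eq_zero_iff : ∀ x, d x = 0 ↔ ∀ i j : Fin n, x i = x j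
  symm : ∀ (x : Fin n → X) (σ : Equiv.Perm (Fin n)), d (x ∘ σ) = d x
  simplex : ∀ (x : Fin n → X) (z : X), d x ≤ ∑ i, d (Function.update x i z)

lemma swap_update_eq {X : Type*} {n : ℕ} (x : Fin n → X) (z : X) (i j : Fin n)
    (hij : i ≠ j) :
    (Function.update (Function.update x j z) i (x j)) ∘ (Equiv.swap i j) =
      Function.update x i z := by
  funext m
  rcases eq_or_ne m i with rfl | hmi
  · simp [Equiv.swap_apply_left, Function.update_apply, hij.symm, hij]
  · rcases eq_or_ne m j with rfl | hmj
    · simp [Equiv.swap_apply_right, Function.update_apply, hij, hmi]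
    · simp [Equiv.swap_apply_of_ne_of_ne hmi hmj, Function.update_apply, hmi, hmj]

lemma aux_partial {X : Type*} {n : ℕ}
    (d : (Fin n → X) → ℝ) (hd : IsNDistance d) (K : ℝ) (hK0 : 0 < K)
    (hK : ∀ (x : Fin n → X) (z : X), d x ≤ K * ∑ i, d (Function.update x i z)) :
    ∀ m k, k + m = n → (n : ℝ) - 1 / K < k →
      ∀ (x : Fin n → X) (z : X),
        (1 / K - n + k) * d x ≤
          ∑ i ∈ Finset.univ.filter (fun i : Fin n => (i : ℕ) < k), d (Function.update x i z) := by
  intro m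
  induction m with
  | zero =>
    intro k hkn hk1 x z
    have hkn' : k = n := by omega
    have hfilter : (Finset.univ.filter (fun i : Fin n => (i : ℕ) < k)) = Finset.univ := by
      ext i; simp; omega
    rw [hfilter]
    have h1 : (1 / K - (n:ℝ) + k) = 1 / K := by rw [hkn']; ring
    rw [h1, div_mul_eq_mul_div, div_le_iff₀ hK0]
    nlinarith [hK x z]
  | succ m ih =>
    intro k hkn hk1 x z
    have hklt : k < n := by omega
    have hIH := ih (k + 1) (by omega) (by push_cast; linarith)
    set j : Fin n := ⟨k, hklt⟩ with hj
    have hfilter : (Finset.univ.filter (fun i : Fin n => (i : ℕ) < k + 1)) =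
        insert j (Finset.univ.filter (fun i : Fin n => (i : ℕ) < k)) := by
      ext i
      simp [Fin.ext_iff, hj]
      omega
    have hjnot : j ∉ (Finset.univ.filter (fun i : Fin n => (i : ℕ) < k)) := by
      simp [hj]
    have hsplit : ∀ (w : Fin n → X) (u : X),
        ∑ i ∈ Finset.univ.filter (fun i : Fin n => (i : ℕ) < k + 1), d (Function.update w i u) =
          d (Function.update w j u) +
            ∑ i ∈ Finset.univ.filter (fun i : Fin n => (i : ℕ) < k), d (Function.update w i u) := by
      intro w u
      rw [hfilter, Finset.sum_insert hjnot]
    have hb1 : 1 < 1 / K - (n:ℝ) + k + 1 := by linarith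
    -- Claim A
    have hA : (1 / K - (n:ℝ) + k + 1) * d x ≤
        d (Function.update x j z) +
          ∑ i ∈ Finset.univ.filter (fun i : Fin n => (i : ℕ) < k), d (Function.update x i z) := by
      have h1 := hIH x z
      rw [hsplit x z] at h1
      push_cast at h1
      linarith
    -- Claim B
    have hB : (1 / K - (n:ℝ) + k + 1) * d (Function.update x j z) ≤
        d x + ∑ i ∈ Finset.univ.filter (fun i : Fin n => (i : ℕ) < k), d (Function.update x i z) := by
      have h2 := hIH (Function.update x j z) (x j)
      rw [hsplit (Function.update x j z) (x j)] at h2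
      have hterm : Function.update (Function.update x j z) j (x j) = x := by
        rw [Function.update_idem, Function.update_eq_self]
      rw [hterm] at h2
      have hsum : ∑ i ∈ Finset.univ.filter (fun i : Fin n => (i : ℕ) < k),
          d (Function.update (Function.update x j z) i (x j)) =
          ∑ i ∈ Finset.univ.filter (fun i : Fin n => (i : ℕ) < k), d (Function.update x i z) := by
        apply Finset.sum_congr rfl
        intro i hi
        have hik : (i : ℕ) < k := by simpa using hi
        have hij : i ≠ j := by
          intro h
          rw [h] at hik
          simp [hj] at hik
        rw [← hd.symm (Function.update (Function.update x j z) i (x j)) (Equiv.swap i j),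
          swap_update_eq x z i j hij]
      rw [hsum] at h2
      push_cast at h2
      linarith
    nlinarith [mul_le_mul_of_nonneg_left hA (by linarith : (0:ℝ) ≤ 1 / K - (n:ℝ) + k + 1)]

theorem partial_simplex_of_best_constant {X : Type*} {n : ℕ} (hn : 2 ≤ n)
    (d : (Fin n → X) → ℝ) (hd : IsNDistance d) (K : ℝ) (hK0 : 0 < K)
    (hK : ∀ (x : Fin n → X) (z : X), d x ≤ K * ∑ i, d (Function.update x i z))
    (k : ℕ) (hk1 : (n : ℝ) - 1 / K < k) (hk2 : k ≤ n) :
    ∀ (x : Fin n → X) (z : X),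
      d x ≤ (1 / (1 / K - n + k)) *
        ∑ i ∈ Finset.univ.filter (fun i : Fin n => (i : ℕ) < k), d (Function.update x i z) := by
  intro x z
  have ha : (0:ℝ) < 1 / K - n + k := by linarith
  have h := aux_partial d hd K hK0 hK (n - k) k (by omega) hk1 x z
  rw [one_div, ← div_eq_inv_mul, le_div_iff₀ ha]
  linarith [h]
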